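/- For every t > 0 and every κ ≥ 1, √(ln(2+κt))/(1+t) ≤ 2√(ln(1+κ)). -/
import Mathlib


theorem sqrt_log_ineq (t κ : ℝ) (ht : 0 < t) (hκ : 1 ≤ κ) :
    Real.sqrt (Real.log (2 + κ * t)) / (1 + t) ≤ 2 * Real.sqrt (Real.log (1 + κ)) := by
  have h1t : (1:ℝ) < 1 + t := by linarith
  have h1κ : (1:ℝ) < 1 + κ := by linarith
  have hlogκ : Real.log 2 ≤ Real.log (1 + κ) := by
    apply Real.log_le_log (by norm_num); linarith
  have hhalf : (1:ℝ)/2 ≤ Real.sqrt (Real.log (1 + κ)) := by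
    have h2 : (1:ℝ)/4 ≤ Real.log 2 := by
      nlinarith [Real.log_two_gt_d9]
    calc (1:ℝ)/2 = Real.sqrt (1/4) := by
          rw [show (1:ℝ)/4 = (1/2)^2 by norm_num, Real.sqrt_sq (by norm_num)]
      _ ≤ Real.sqrt (Real.log (1 + κ)) := Real.sqrt_le_sqrt (by linarith)
  -- log bound
  have hlogle : Real.log (2 + κ * t) ≤ Real.log (1 + κ) + Real.log (1 + t) := by
    rw [← Real.log_mul (by linarith) (by linarith)]
    apply Real.log_le_log (by nlinarith)
    nlinarith
  have hsq : Real.sqrt (Real.log (2 + κ * t)) ≤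
      Real.sqrt (Real.log (1 + κ)) + Real.sqrt (Real.log (1 + t)) := by
    calc Real.sqrt (Real.log (2 + κ * t)) ≤
        Real.sqrt (Real.log (1 + κ) + Real.log (1 + t)) := Real.sqrt_le_sqrt hlogle
      _ ≤ _ := by
          have ha : 0 ≤ Real.log (1 + κ) := Real.log_nonneg (by linarith)
          have hb : 0 ≤ Real.log (1 + t) := Real.log_nonneg (by linarith)
          calc Real.sqrt (Real.log (1 + κ) + Real.log (1 + t))
              ≤ Real.sqrt ((Real.sqrt (Real.log (1 + κ)) + Real.sqrt (Real.log (1 + t)))^2) := by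
                apply Real.sqrt_le_sqrt
                nlinarith [Real.sq_sqrt ha, Real.sq_sqrt hb,
                  mul_nonneg (Real.sqrt_nonneg (Real.log (1 + κ))) (Real.sqrt_nonneg (Real.log (1 + t)))]
            _ = _ := Real.sqrt_sq (by positivity)
  -- √ln(1+t)/(1+t) ≤ 1/2
  have hlt : Real.sqrt (Real.log (1 + t)) / (1 + t) ≤ 1/2 := by
    rw [div_le_iff₀ (by linarith)]
    have hlog : Real.log (1 + t) ≤ ((1 + t)/2)^2 := by
      have := Real.log_le_sub_one_of_pos (show (0:ℝ) < 1 + t by linarith)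
      nlinarith [sq_nonneg (t - 1)]
    calc Real.sqrt (Real.log (1 + t)) ≤ Real.sqrt (((1 + t)/2)^2) :=
          Real.sqrt_le_sqrt hlog
      _ = (1 + t)/2 := Real.sqrt_sq (by linarith)
      _ = 1/2 * (1 + t) := by ring
  have hκdiv : Real.sqrt (Real.log (1 + κ)) / (1 + t) ≤ Real.sqrt (Real.log (1 + κ)) := by
    apply div_le_self (Real.sqrt_nonneg _) (by linarith)
  calc Real.sqrt (Real.log (2 + κ * t)) / (1 + t)
      ≤ (Real.sqrt (Real.log (1 + κ)) + Real.sqrt (Real.log (1 + t))) / (1 + t) := by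
        exact (div_le_div_iff_of_pos_right (by linarith)).mpr hsq
    _ = Real.sqrt (Real.log (1 + κ)) / (1 + t) + Real.sqrt (Real.log (1 + t)) / (1 + t) := by
        ring
    _ ≤ Real.sqrt (Real.log (1 + κ)) + 1/2 := by linarith
    _ ≤ 2 * Real.sqrt (Real.log (1 + κ)) := by linarith
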